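/- Let 0 < β < 1 and let F, G be families of subsets of [n] such that |F ∩ G| > βn for all F ∈ F and G ∈ G. Then |F| · |G| ≤ 2^{2n·H((1+β)/2)}, where H is the binary entropy function H(p) = p·log₂(1/p) + (1-p)·log₂(1/(1-p)). -/

import Mathlib

/-- The binary entropy function. -/
noncomputable def binEnt (x : ℝ) : ℝ :=
  x * Real.logb 2 (1 / x) + (1 - x) * Real.logb 2 (1 / (1 - x))

namespace FR
open Finset Real
open scoped FinsetFamily symmDiff

variable {n : ℕ}

def pre (A : Finset (Fin n)) (m : ℕ) : ℕ := #(A.filter fun v => v.val < m)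

/-- walk height at time `m` -/
def wk (A : Finset (Fin n)) (m : ℕ) : ℤ := 2 * pre A m - m

lemma pre_zero (A : Finset (Fin n)) : pre A 0 = 0 := by
  simp [pre]

lemma wk_zero (A : Finset (Fin n)) : wk A 0 = 0 := by simp [wk, pre_zero]

lemma card_univ_filter_lt (m : ℕ) (hm : m ≤ n) :
    #((univ : Finset (Fin n)).filter fun v => v.val < m) = m := by
  classical
  have : #((univ : Finset (Fin n)).filter fun v => v.val < m) = #(Finset.range m) := by
    apply Finset.card_bij (fun (v : Fin n) _ => v.val)
    · intro a ha
      simp only [mem_filter] at ha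
      simpa using ha.2
    · intro a ha b hb hab
      exact Fin.ext hab
    · intro b hb
      simp only [Finset.mem_range] at hb
      exact ⟨⟨b, lt_of_lt_of_le hb hm⟩, by simp [hb], rfl⟩
  simpa using this

lemma pre_le (A : Finset (Fin n)) (m : ℕ) (hm : m ≤ n) : pre A m ≤ m := by
  calc pre A m ≤ #((univ : Finset (Fin n)).filter fun v => v.val < m) :=
        card_le_card (filter_subset_filter _ (subset_univ A))
  _ = m := card_univ_filter_lt m hm

lemma wk_le (A : Finset (Fin n)) (m : ℕ) (hm : m ≤ n) : wk A m ≤ m := by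
  have := pre_le A m hm
  unfold wk; omega

lemma filter_val_eq (A : Finset (Fin n)) (m : ℕ) (hm : m < n) :
    A.filter (fun v => v.val = m) = if (⟨m, hm⟩ : Fin n) ∈ A then {(⟨m, hm⟩ : Fin n)} else ∅ := by
  split_ifs with h
  · ext v
    simp only [mem_filter, mem_singleton]
    constructor
    · rintro ⟨hv, hvm⟩; exact Fin.ext hvm
    · rintro rfl; exact ⟨h, rfl⟩
  · ext v
    simp only [mem_filter, notMem_empty, iff_false]
    rintro ⟨hv, hvm⟩
    exact h (by rwa [show (⟨m, hm⟩ : Fin n) = v from (Fin.ext hvm.symm)])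

lemma pre_succ (A : Finset (Fin n)) (m : ℕ) (hm : m < n) :
    pre A (m + 1) = pre A m + (if (⟨m, hm⟩ : Fin n) ∈ A then 1 else 0) := by
  unfold pre
  have : A.filter (fun v => v.val < m + 1)
      = A.filter (fun v => v.val < m) ∪ A.filter (fun v => v.val = m) := by
    rw [← filter_or]
    apply filter_congr
    intro v _
    constructor
    · intro h; omega
    · intro h; omega
  rw [this, card_union_of_disjoint, filter_val_eq A m hm]
  · split_ifs <;> simp
  · rw [disjoint_left]
    intro a ha hb
    simp only [mem_filter] at ha hb
    omega

lemma pre_insert_erase' (A : Finset (Fin n)) (x y : Fin n) (hx : x ∈ A) (hy : y ∉ A) (m : ℕ) :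
    pre (insert y (A.erase x)) m + (if x.val < m then 1 else 0)
      = pre A m + (if y.val < m then 1 else 0) := by
  classical
  unfold pre
  rw [filter_insert, filter_erase]
  by_cases hym : y.val < m <;> by_cases hxm : x.val < m <;>
      simp only [hym, hxm, if_true, if_false]
  · have hxf : x ∈ A.filter fun v => v.val < m := mem_filter.2 ⟨hx, hxm⟩
    have hyf : y ∉ (A.filter fun v => v.val < m).erase x := by
      intro hc
      exact hy (mem_filter.1 (mem_of_mem_erase hc)).1
    rw [card_insert_of_notMem hyf, card_erase_of_mem hxf]
    have : 1 ≤ #(A.filter fun v => v.val < m) := card_pos.2 ⟨x, hxf⟩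
    omega
  · have hxf : x ∉ A.filter fun v => v.val < m := fun hc => hxm (mem_filter.1 hc).2
    rw [erase_eq_of_notMem hxf, card_insert_of_notMem
      (fun hc => hy (mem_filter.1 hc).1)]
  · have hxf : x ∈ A.filter fun v => v.val < m := mem_filter.2 ⟨hx, hxm⟩
    rw [card_erase_of_mem hxf]
    have : 1 ≤ #(A.filter fun v => v.val < m) := card_pos.2 ⟨x, hxf⟩
    omega
  · have hxf : x ∉ A.filter fun v => v.val < m := fun hc => hxm (mem_filter.1 hc).2
    rw [erase_eq_of_notMem hxf]

lemma wk_succ (A : Finset (Fin n)) (m : ℕ) (hm : m < n) :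
    wk A (m + 1) = wk A m + 2 * (if (⟨m, hm⟩ : Fin n) ∈ A then 1 else 0) - 1 := by
  unfold wk
  rw [pre_succ A m hm]
  split_ifs <;> push_cast <;> ring

lemma climb (A B : Finset (Fin n)) (x : Fin n) (hxA : x ∈ A) (hxB : x ∈ B) :
    ∀ k m, m + k = x.val → (∀ v : Fin n, m ≤ v.val → v.val < x.val → v ∈ A ∨ v ∈ B) →
    wk A m + wk B m + 2 ≤ wk A (x.val + 1) + wk B (x.val + 1) := by
  intro k
  induction k with
  | zero =>
    intro m hmx _
    rw [Nat.add_zero] at hmx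
    subst hmx
    have hmn : x.val < n := x.isLt
    rw [wk_succ A x.val hmn, wk_succ B x.val hmn]
    have hx : (⟨x.val, hmn⟩ : Fin n) = x := by apply Fin.ext; rfl
    rw [hx, if_pos hxA, if_pos hxB]
    omega
  | succ k ih =>
    intro m hmx hgap
    have hmn : m < n := by have := x.isLt; omega
    have hv : (⟨m, hmn⟩ : Fin n) ∈ A ∨ (⟨m, hmn⟩ : Fin n) ∈ B := by
      apply hgap <;> simp <;> omega
    have h1 : wk A m + wk B m ≤ wk A (m + 1) + wk B (m + 1) := by
      rw [wk_succ A m hmn, wk_succ B m hmn]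
      rcases hv with h | h
      · rw [if_pos h]; split_ifs <;> omega
      · rw [if_pos h]; split_ifs <;> omega
    have h2 := ih (m + 1) (by omega) (fun v hv1 hv2 => hgap v (by omega) hv2)
    omega

def StepRel (A A' : Finset (Fin n)) : Prop :=
  ∃ x ∈ A, ∃ y : Fin n, y ∉ A ∧ y < x ∧ A' = insert y (A.erase x)

lemma sum_step {A A' : Finset (Fin n)} (h : StepRel A A') :
    (∑ v ∈ A', v.val) < ∑ v ∈ A, v.val := by
  obtain ⟨x, hx, y, hy, hyx, rfl⟩ := h
  have hy' : y ∉ A.erase x := fun hc => hy (mem_of_mem_erase hc)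
  rw [Finset.sum_insert hy']
  have h2 : (∑ v ∈ A.erase x, v.val) + x.val = ∑ v ∈ A, v.val :=
    Finset.sum_erase_add A _ hx
  have : y.val < x.val := hyx
  omega

lemma key_core (t : ℕ) (ht : 1 ≤ t) (A B : Finset (Fin n))
    (hcross : ∀ A', Relation.ReflTransGen StepRel A A' → t ≤ #(A' ∩ B))
    (IH : ∀ A₁, StepRel A A₁ →
      ∃ m, 1 ≤ m ∧ m ≤ n ∧ 2 * (t : ℤ) ≤ wk A₁ m + wk B m) :
    ∃ m, 1 ≤ m ∧ m ≤ n ∧ 2 * (t : ℤ) ≤ wk A m + wk B m := by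
  classical
  have h0 : t ≤ #(A ∩ B) := hcross A Relation.ReflTransGen.refl
  have hne : (A ∩ B).Nonempty := card_pos.1 (by omega)
  set x := (A ∩ B).max' hne with hxdef
  have hxmem : x ∈ A ∩ B := (A ∩ B).max'_mem hne
  have hxA : x ∈ A := (mem_inter.1 hxmem).1
  have hxB : x ∈ B := (mem_inter.1 hxmem).2
  by_cases hy : ∃ y : Fin n, y.val < x.val ∧ y ∉ A ∧ y ∉ B
  · -- gap case
    set Y := univ.filter (fun y : Fin n => y.val < x.val ∧ y ∉ A ∧ y ∉ B) with hYdef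
    have hYne : Y.Nonempty := by
      obtain ⟨y, h1, h2, h3⟩ := hy
      exact ⟨y, mem_filter.2 ⟨mem_univ _, h1, h2, h3⟩⟩
    set y := Y.max' hYne with hydef
    have hyY : y ∈ Y := Y.max'_mem hYne
    have hyx : y.val < x.val := (mem_filter.1 hyY).2.1
    have hyA : y ∉ A := (mem_filter.1 hyY).2.2.1
    have hyB : y ∉ B := (mem_filter.1 hyY).2.2.2
    have hstep : StepRel A (insert y (A.erase x)) :=
      ⟨x, hxA, y, hyA, by rw [Fin.lt_def]; exact hyx, rfl⟩
    obtain ⟨m₁, hm1, hmn, hwk⟩ := IH _ hstep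
    have hpre := pre_insert_erase' A x y hxA hyA m₁
    by_cases hc1 : m₁ ≤ y.val
    · refine ⟨m₁, hm1, hmn, ?_⟩
      have hif1 : ¬ (y.val < m₁) := by omega
      have hif2 : ¬ (x.val < m₁) := by omega
      rw [if_neg hif1, if_neg hif2] at hpre
      unfold wk at hwk ⊢
      push_cast at hpre hwk ⊢
      omega
    · by_cases hc2 : x.val < m₁
      · refine ⟨m₁, hm1, hmn, ?_⟩
        rw [if_pos (by omega : y.val < m₁), if_pos hc2] at hpre
        unfold wk at hwk ⊢
        push_cast at hpre hwk ⊢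
        omega
      · -- y.val < m₁ ≤ x.val
        have hgap : ∀ v : Fin n, m₁ ≤ v.val → v.val < x.val → v ∈ A ∨ v ∈ B := by
          intro v hv1 hv2
          by_contra hcon
          push_neg at hcon
          have hvY : v ∈ Y := mem_filter.2 ⟨mem_univ _, hv2, hcon.1, hcon.2⟩
          have hle := Y.le_max' v hvY
          rw [← hydef, Fin.le_def] at hle
          omega
        have hclimb := climb A B x hxA hxB (x.val - m₁) m₁ (by omega) hgap
        have hlow : 2 * (t : ℤ) ≤ wk A m₁ + wk B m₁ + 2 := by
          rw [if_pos (by omega : y.val < m₁), if_neg (by omega : ¬ (x.val < m₁))] at hpre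
          unfold wk at hwk ⊢
          push_cast at hpre hwk ⊢
          omega
        exact ⟨x.val + 1, by omega, by have := x.isLt; omega, by linarith⟩
  · -- no gap case
    push_neg at hy
    refine ⟨x.val + 1, by omega, by have := x.isLt; omega, ?_⟩
    set m := x.val + 1 with hmdef
    have hmn : m ≤ n := x.isLt
    have h1 : pre (A ∪ B) m = m := by
      have hset : (A ∪ B).filter (fun v => v.val < m) = univ.filter (fun v => v.val < m) := by
        ext v
        simp only [mem_filter, mem_union, mem_univ, true_and]
        constructor
        · exact fun h => h.2
        · intro hvm
          refine ⟨?_, hvm⟩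
          rcases Nat.lt_or_ge v.val x.val with hlt | hge
          · by_cases hvA : v ∈ A
            · exact Or.inl hvA
            · exact Or.inr (hy v hlt hvA)
          · have : v = x := Fin.ext (by omega)
            subst this
            exact Or.inl hxA
      unfold pre
      rw [hset]
      exact card_univ_filter_lt m hmn
    have h2 : pre (A ∩ B) m = #(A ∩ B) := by
      unfold pre
      congr 1
      apply filter_true_of_mem
      intro v hv
      have := (A ∩ B).le_max' v hv
      rw [← hxdef, Fin.le_def] at this
      omega
    have h3 : pre A m + pre B m = pre (A ∪ B) m + pre (A ∩ B) m := by
      unfold pre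
      rw [filter_union, filter_inter_distrib]
      exact (card_union_add_card_inter _ _).symm
    unfold wk
    push_cast
    omega

lemma key (t : ℕ) (ht : 1 ≤ t) (B : Finset (Fin n)) :
    ∀ A : Finset (Fin n),
      (∀ A', Relation.ReflTransGen StepRel A A' → t ≤ #(A' ∩ B)) →
      ∃ m, 1 ≤ m ∧ m ≤ n ∧ 2 * (t : ℤ) ≤ wk A m + wk B m := by
  classical
  have main : ∀ N : ℕ, ∀ A : Finset (Fin n), (∑ v ∈ A, v.val) ≤ N →
      (∀ A', Relation.ReflTransGen StepRel A A' → t ≤ #(A' ∩ B)) →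
      ∃ m, 1 ≤ m ∧ m ≤ n ∧ 2 * (t : ℤ) ≤ wk A m + wk B m := by
    intro N
    induction N with
    | zero =>
      intro A hA hcross
      refine key_core t ht A B hcross (fun A₁ hstep => absurd (sum_step hstep) (by omega))
    | succ N ih =>
      intro A hA hcross
      refine key_core t ht A B hcross (fun A₁ hstep => ?_)
      have hsum := sum_step hstep
      refine ih A₁ (by omega) (fun A' hreach => hcross A' (Relation.ReflTransGen.head hstep hreach))
  intro A hA
  exact main (∑ v ∈ A, v.val) A le_rfl hA

def Shifted (F : Finset (Finset (Fin n))) : Prop :=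
  ∀ x y : Fin n, y < x → UV.compression {y} {x} F = F

def Cross (t : ℕ) (F G : Finset (Finset (Fin n))) : Prop :=
  ∀ A ∈ F, ∀ B ∈ G, t ≤ #(A ∩ B)

lemma compress_eq (x y : Fin n) (A : Finset (Fin n)) (hx : x ∈ A) (hy : y ∉ A) (hxy : y ≠ x) :
    UV.compress {y} {x} A = insert y (A.erase x) := by
  rw [UV.compress, if_pos]
  · ext v
    simp only [sup_eq_union, mem_sdiff, mem_union, mem_singleton, mem_insert, mem_erase]
    constructor
    · rintro ⟨h1 | h1, h2⟩
      · exact Or.inr ⟨h2, h1⟩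
      · exact Or.inl h1
    · rintro (rfl | ⟨h1, h2⟩)
      · exact ⟨Or.inr rfl, hxy⟩
      · exact ⟨Or.inl h2, h1⟩
  · constructor
    · simpa using hy
    · simpa using hx

/-- Membership in a shifted family is preserved along down-moves. -/
lemma shifted_reach {F : Finset (Finset (Fin n))} (hF : Shifted F)
    {A A' : Finset (Fin n)} (hA : A ∈ F) (h : Relation.ReflTransGen StepRel A A') : A' ∈ F := by
  induction h with
  | refl => exact hA
  | tail hab hbc ih =>
    obtain ⟨x, hx, y, hy, hyx, rfl⟩ := hbc
    rename_i b
    have := UV.compress_mem_compression (u := {y}) (v := {x}) ih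
    rw [hF x y hyx, compress_eq x y b hx hy (ne_of_lt hyx)] at this
    exact this

lemma card_insert_erase_inter (A B : Finset (Fin n)) (x y : Fin n)
    (hx : x ∈ A) (hy : y ∉ A) :
    #((insert y (A.erase x)) ∩ B) + (if x ∈ B then 1 else 0)
      = #(A ∩ B) + (if y ∈ B then 1 else 0) := by
  classical
  by_cases hyB : y ∈ B
  · rw [insert_inter_of_mem hyB]
    have hynotin : y ∉ A.erase x ∩ B := by
      intro hc
      exact hy (mem_of_mem_erase (mem_inter.1 hc).1)
    rw [card_insert_of_notMem hynotin, if_pos hyB, erase_inter]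
    by_cases hxB : x ∈ B
    · have hxin : x ∈ A ∩ B := mem_inter.2 ⟨hx, hxB⟩
      rw [if_pos hxB, card_erase_of_mem hxin]
      have : 1 ≤ #(A ∩ B) := card_pos.2 ⟨x, hxin⟩
      omega
    · have hxnotin : x ∉ A ∩ B := fun hc => hxB (mem_inter.1 hc).2
      rw [if_neg hxB, erase_eq_of_notMem hxnotin]
  · rw [insert_inter_of_notMem hyB, if_neg hyB, erase_inter]
    by_cases hxB : x ∈ B
    · have hxin : x ∈ A ∩ B := mem_inter.2 ⟨hx, hxB⟩
      rw [if_pos hxB, card_erase_of_mem hxin]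
      have : 1 ≤ #(A ∩ B) := card_pos.2 ⟨x, hxin⟩
      omega
    · have hxnotin : x ∉ A ∩ B := fun hc => hxB (mem_inter.1 hc).2
      rw [if_neg hxB, erase_eq_of_notMem hxnotin]

/-- One-sided preservation: a compressed set from F against any member of 𝓒 G. -/
lemma cross_half {t : ℕ} {F G : Finset (Finset (Fin n))} (h : Cross t F G)
    (x y : Fin n) (hxy : y ≠ x)
    {A : Finset (Fin n)} (hA : A ∈ F) (hxA : x ∈ A) (hyA : y ∉ A)
    {B' : Finset (Finset (Fin n))} (hB'def : B' = 𝓒 {y} {x} G)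
    {Bs : Finset (Fin n)} (hBs : Bs ∈ B') :
    t ≤ #((insert y (A.erase x)) ∩ Bs) := by
  classical
  rw [hB'def, UV.mem_compression] at hBs
  rcases hBs with ⟨hBsG, hBscomp⟩ | ⟨hBsnot, B, hBG, hBcomp⟩
  · -- Bs is an old member, and its compression is in G
    by_cases hxB : x ∈ Bs
    · by_cases hyB : y ∈ Bs
      · have := card_insert_erase_inter A Bs x y hxA hyA
        rw [if_pos hxB, if_pos hyB] at this
        have hAB := h A hA Bs hBsG
        omega
      · -- the interesting case: use that Bs's compression is in G
        rw [compress_eq x y Bs hxB hyB hxy] at hBscomp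
        have hAB' := h A hA _ hBscomp
        have e1 := card_insert_erase_inter A Bs x y hxA hyA
        rw [if_pos hxB, if_neg hyB] at e1
        -- #(A ∩ compress Bs) : compute via symmetric lemma with roles swapped
        have e2 := card_insert_erase_inter Bs A x y hxB hyB
        rw [if_pos hxA, if_neg hyA, inter_comm, inter_comm Bs A] at e2
        omega
    · have := card_insert_erase_inter A Bs x y hxA hyA
      rw [if_neg hxB] at this
      have hAB := h A hA Bs hBsG
      split_ifs at this <;> omega
  · -- Bs is a new member : Bs = compress B
    by_cases hprop : x ∈ B ∧ y ∉ B
    · rw [compress_eq x y B hprop.1 hprop.2 hxy] at hBcomp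
      subst hBcomp
      have hAB := h A hA B hBG
      -- #(insert y (A.erase x) ∩ insert y (B.erase x)) = #(A ∩ B)
      have e1 := card_insert_erase_inter A (insert y (B.erase x)) x y hxA hyA
      have hxBs : x ∉ insert y (B.erase x) := by
        simp only [mem_insert, mem_erase]
        rintro (rfl | ⟨hc, _⟩)
        · exact hprop.2 hprop.1
        · exact hc rfl
      have hyBs : y ∈ insert y (B.erase x) := mem_insert_self _ _
      rw [if_neg hxBs, if_pos hyBs] at e1
      -- #(A ∩ insert y (B.erase x)) = #(A ∩ B) - 1 + 0
      have e2 := card_insert_erase_inter B A x y hprop.1 hprop.2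
      rw [if_pos hxA, if_neg hyA, inter_comm, inter_comm B A] at e2
      omega
    · -- compression did nothing to B
      have : UV.compress {y} {x} B = B := by
        rw [UV.compress, if_neg]
        intro hc
        obtain ⟨h1, h2⟩ := hc
        apply hprop
        constructor
        · exact singleton_subset_iff.1 h2
        · intro hyB
          have := disjoint_left.1 h1 (mem_singleton_self y) hyB
          exact this
      rw [this] at hBcomp
      subst hBcomp
      exact absurd hBG hBsnot

lemma cross_compression {t : ℕ} {F G : Finset (Finset (Fin n))} (h : Cross t F G)
    (x y : Fin n) (hxy : y ≠ x) :
    Cross t (𝓒 {y} {x} F) (𝓒 {y} {x} G) := by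
  classical
  intro As hAs Bs hBs
  rw [UV.mem_compression] at hAs
  rcases hAs with ⟨hAsF, hAscomp⟩ | ⟨hAsnot, A, hAF, hAcomp⟩
  · -- As old
    rw [UV.mem_compression] at hBs
    rcases hBs with ⟨hBsG, _⟩ | ⟨hBsnot, B, hBG, hBcomp⟩
    · exact h As hAsF Bs hBsG
    · -- Bs new : use symmetric half lemma
      by_cases hprop : x ∈ B ∧ y ∉ B
      · rw [compress_eq x y B hprop.1 hprop.2 hxy] at hBcomp
        subst hBcomp
        rw [inter_comm]
        have hsymm : Cross t G F := fun B hB A hA => by rw [inter_comm]; exact h A hA B hB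
        refine cross_half hsymm x y hxy hBG hprop.1 hprop.2 rfl ?_
        exact UV.mem_compression.2 (Or.inl ⟨hAsF, hAscomp⟩)
      · have : UV.compress {y} {x} B = B := by
          rw [UV.compress, if_neg]
          rintro ⟨h1, h2⟩
          exact hprop ⟨singleton_subset_iff.1 h2, fun hyB => disjoint_left.1 h1 (mem_singleton_self y) hyB⟩
        rw [this] at hBcomp
        subst hBcomp
        exact absurd hBG hBsnot
  · -- As new
    by_cases hprop : x ∈ A ∧ y ∉ A
    · rw [compress_eq x y A hprop.1 hprop.2 hxy] at hAcomp
      subst hAcomp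
      exact cross_half h x y hxy hAF hprop.1 hprop.2 rfl hBs
    · have : UV.compress {y} {x} A = A := by
        rw [UV.compress, if_neg]
        rintro ⟨h1, h2⟩
        exact hprop ⟨singleton_subset_iff.1 h2, fun hyA => disjoint_left.1 h1 (mem_singleton_self y) hyA⟩
      rw [this] at hAcomp
      subst hAcomp
      exact absurd hAF hAsnot

def phi (F : Finset (Finset (Fin n))) : ℕ := ∑ A ∈ F, ∑ v ∈ A, v.val

lemma compress_sum_le (x y : Fin n) (hyx : y < x) (a : Finset (Fin n)) :
    (∑ v ∈ UV.compress {y} {x} a, v.val) ≤ ∑ v ∈ a, v.val := by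
  classical
  rw [UV.compress]
  split_ifs with hcond
  · obtain ⟨hdisj, hsub⟩ := hcond
    have hx : x ∈ a := singleton_subset_iff.1 hsub
    have hy : y ∉ a := fun hc => (disjoint_left.1 hdisj (mem_singleton_self y)) hc
    have : (a ⊔ {y}) \ {x} = insert y (a.erase x) := by
      ext v
      simp only [sup_eq_union, mem_sdiff, mem_union, mem_singleton, mem_insert, mem_erase]
      constructor
      · rintro ⟨h1 | h1, h2⟩
        · exact Or.inr ⟨h2, h1⟩
        · exact Or.inl h1
      · rintro (rfl | ⟨h1, h2⟩)
        · exact ⟨Or.inr rfl, ne_of_lt hyx⟩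
        · exact ⟨Or.inl h2, h1⟩
    rw [this]
    have hstep : StepRel a (insert y (a.erase x)) := ⟨x, hx, y, hy, hyx, rfl⟩
    exact le_of_lt (sum_step hstep)
  · exact le_rfl

lemma compression_eq_self_of_all {F : Finset (Finset (Fin n))} (u v : Finset (Fin n))
    (h : ∀ a ∈ F, UV.compress u v a ∈ F) : UV.compression u v F = F := by
  classical
  rw [UV.compression]
  have h1 : ({a ∈ F | UV.compress u v a ∈ F} : Finset _) = F :=
    filter_true_of_mem h
  have h2 : ({a ∈ F.image (UV.compress u v) | a ∉ F} : Finset _) = ∅ := by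
    rw [eq_empty_iff_forall_notMem]
    intro a ha
    rw [mem_filter, mem_image] at ha
    obtain ⟨⟨b, hb, rfl⟩, hnot⟩ := ha
    exact hnot (h b hb)
  rw [h1, h2, union_empty]

lemma phi_compression (x y : Fin n) (hyx : y < x) (F : Finset (Finset (Fin n))) :
    phi (UV.compression {y} {x} F) ≤ phi F ∧
      (UV.compression {y} {x} F ≠ F → phi (UV.compression {y} {x} F) < phi F) := by
  classical
  set c := UV.compress ({y} : Finset (Fin n)) {x} with hcdef
  set f : Finset (Fin n) → ℕ := fun A => ∑ v ∈ A, v.val with hfdef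
  have hsplit : phi (UV.compression {y} {x} F)
      = (∑ a ∈ F.filter (fun a => c a ∈ F), f a)
        + ∑ a ∈ F.filter (fun a => c a ∉ F), f (c a) := by
    rw [phi, UV.compression]
    rw [sum_union UV.compress_disjoint]
    congr 1
    rw [filter_image]
    apply sum_image
    intro a ha b hb hab
    exact UV.compress_injOn (by simpa using ha) (by simpa using hb) hab
  have hphiF : phi F = (∑ a ∈ F.filter (fun a => c a ∈ F), f a)
        + ∑ a ∈ F.filter (fun a => c a ∉ F), f a := by
    rw [phi, sum_filter_add_sum_filter_not]
  constructor
  · rw [hsplit, hphiF]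
    have : ∀ a ∈ F.filter (fun a => c a ∉ F), f (c a) ≤ f a :=
      fun a _ => compress_sum_le x y hyx a
    exact Nat.add_le_add le_rfl (sum_le_sum this)
  · intro hne
    have hnonempty : (F.filter (fun a => c a ∉ F)).Nonempty := by
      rw [nonempty_iff_ne_empty]
      intro hemp
      apply hne
      apply compression_eq_self_of_all
      intro a ha
      by_contra hc
      have : a ∈ F.filter (fun a => c a ∉ F) := mem_filter.2 ⟨ha, hc⟩
      rw [hemp] at this
      exact notMem_empty a this
    rw [hsplit, hphiF]
    apply Nat.add_lt_add_left
    apply sum_lt_sum_of_nonempty hnonempty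
    intro a ha
    rw [mem_filter] at ha
    have hca : c a ≠ a := fun hc => ha.2 (by rw [hc]; exact ha.1)
    have hcond : x ∈ a ∧ y ∉ a := by
      by_contra hcon
      apply hca
      rw [hcdef, UV.compress, if_neg]
      rintro ⟨h1, h2⟩
      exact hcon ⟨singleton_subset_iff.1 h2,
        fun hy => disjoint_left.1 h1 (mem_singleton_self y) hy⟩
    have : c a = insert y (a.erase x) := by
      rw [hcdef, UV.compress, if_pos]
      · ext v
        simp only [sup_eq_union, mem_sdiff, mem_union, mem_singleton, mem_insert, mem_erase]
        constructor
        · rintro ⟨h1 | h1, h2⟩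
          · exact Or.inr ⟨h2, h1⟩
          · exact Or.inl h1
        · rintro (rfl | ⟨h1, h2⟩)
          · exact ⟨Or.inr rfl, ne_of_lt hyx⟩
          · exact ⟨Or.inl h2, h1⟩
      · exact ⟨by simpa using hcond.2, by simpa using hcond.1⟩
    rw [this]
    exact sum_step ⟨x, hcond.1, y, hcond.2, hyx, rfl⟩

lemma exists_shifted (t : ℕ) :
    ∀ N, ∀ F G : Finset (Finset (Fin n)), phi F + phi G ≤ N → Cross t F G →
    ∃ F' G' : Finset (Finset (Fin n)), Shifted F' ∧ Shifted G' ∧ #F' = #F ∧ #G' = #G ∧ Cross t F' G' := by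
  intro N
  induction N with
  | zero =>
    intro F G hphi hcross
    by_cases hsh : ∃ x y : Fin n, y < x ∧
        (UV.compression {y} {x} F ≠ F ∨ UV.compression {y} {x} G ≠ G)
    · obtain ⟨x, y, hyx, hor⟩ := hsh
      exfalso
      have h1 := phi_compression x y hyx F
      have h2 := phi_compression x y hyx G
      rcases hor with hne | hne
      · have := h1.2 hne; omega
      · have := h2.2 hne; omega
    · push_neg at hsh
      exact ⟨F, G, fun x y hyx => (hsh x y hyx).1, fun x y hyx => (hsh x y hyx).2,
        rfl, rfl, hcross⟩
  | succ N ih =>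
    intro F G hphi hcross
    by_cases hsh : ∃ x y : Fin n, y < x ∧
        (UV.compression {y} {x} F ≠ F ∨ UV.compression {y} {x} G ≠ G)
    · obtain ⟨x, y, hyx, hor⟩ := hsh
      have h1 := phi_compression x y hyx F
      have h2 := phi_compression x y hyx G
      have hlt : phi (UV.compression {y} {x} F) + phi (UV.compression {y} {x} G) ≤ N := by
        rcases hor with hne | hne
        · have := h1.2 hne; have := h2.1; omega
        · have := h2.2 hne; have := h1.1; omega
      obtain ⟨F', G', hsF, hsG, hcF, hcG, hcr⟩ :=
        ih _ _ hlt (cross_compression hcross x y (ne_of_lt hyx))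
      exact ⟨F', G', hsF, hsG,
        by rw [hcF, UV.card_compression], by rw [hcG, UV.card_compression], hcr⟩
    · push_neg at hsh
      exact ⟨F, G, fun x y hyx => (hsh x y hyx).1, fun x y hyx => (hsh x y hyx).2,
        rfl, rfl, hcross⟩

/-- the upper interval `[m, n)` -/
def upD (m : ℕ) : Finset (Fin n) := univ.filter (fun v => m ≤ v.val)

lemma pre_top (A : Finset (Fin n)) : pre A n = #A := by
  unfold pre
  congr 1
  apply filter_true_of_mem
  exact fun v _ => v.isLt

lemma pre_symmDiff_le (A : Finset (Fin n)) (m m' : ℕ) (h : m' ≤ m) :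
    pre (A ∆ upD m) m' = pre A m' := by
  unfold pre
  congr 1
  ext v
  simp only [mem_filter, Finset.mem_symmDiff, upD, mem_univ, true_and]
  constructor
  · rintro ⟨⟨hvA, _⟩ | ⟨hvD, _⟩, hvm⟩
    · exact ⟨hvA, hvm⟩
    · omega
  · rintro ⟨hvA, hvm⟩
    exact ⟨Or.inl ⟨hvA, by omega⟩, hvm⟩

lemma pre_split (A : Finset (Fin n)) (m m' : ℕ) (h : m ≤ m') :
    pre A m' = pre A m + #(A.filter fun v => m ≤ v.val ∧ v.val < m') := by
  unfold pre
  rw [← card_union_of_disjoint]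
  · congr 1
    rw [← filter_or]
    apply filter_congr
    intro v _
    constructor
    · intro hv
      rcases Nat.lt_or_ge v.val m with h1 | h1
      · exact Or.inl h1
      · exact Or.inr ⟨h1, hv⟩
    · rintro (h1 | ⟨_, h2⟩) <;> omega
  · rw [disjoint_left]
    intro a ha hb
    simp only [mem_filter] at ha hb
    omega

lemma pre_symmDiff_ge (A : Finset (Fin n)) (m m' : ℕ) (h : m ≤ m') (h' : m' ≤ n) :
    pre (A ∆ upD m) m' + pre A m' + m = 2 * pre A m + m' := by
  classical
  set R : Finset (Fin n) := univ.filter (fun v => m ≤ v.val ∧ v.val < m') with hRdef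
  have e1 : pre (A ∆ upD m) m' = pre A m + #(R \ A) := by
    unfold pre
    have hset : ((A ∆ upD m).filter fun v => v.val < m')
        = (A.filter fun v => v.val < m) ∪ (R \ A) := by
      ext v
      simp only [mem_filter, Finset.mem_symmDiff, upD, hRdef, mem_univ, true_and, mem_sdiff,
        mem_union]
      constructor
      · rintro ⟨⟨hvA, hvD⟩ | ⟨hvD, hvA⟩, hvm⟩
        · exact Or.inl ⟨hvA, by omega⟩
        · exact Or.inr ⟨⟨hvD, hvm⟩, hvA⟩
      · rintro (⟨hvA, hvm⟩ | ⟨⟨h1, h2⟩, hvA⟩)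
        · exact ⟨Or.inl ⟨hvA, by omega⟩, by omega⟩
        · exact ⟨Or.inr ⟨h1, hvA⟩, h2⟩
    rw [hset, card_union_of_disjoint]
    rw [disjoint_left]
    intro a ha hb
    simp only [mem_filter, hRdef, mem_sdiff, mem_univ, true_and] at ha hb
    omega
  have e2 : #(R \ A) + #(R ∩ A) = #R := card_sdiff_add_card_inter R A
  have e3 : #R + m = m' := by
    have hm' := card_univ_filter_lt (n := n) m' h'
    have hsplit : ((univ : Finset (Fin n)).filter fun v => v.val < m')
        = ((univ : Finset (Fin n)).filter fun v => v.val < m) ∪ R := by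
      rw [← filter_or]
      apply filter_congr
      intro v _
      constructor
      · intro hv
        rcases Nat.lt_or_ge v.val m with h1 | h1
        · exact Or.inl h1
        · exact Or.inr ⟨h1, hv⟩
      · rintro (h1 | ⟨_, h2⟩) <;> omega
    rw [hsplit, card_union_of_disjoint] at hm'
    · rw [card_univ_filter_lt (n := n) m (le_trans h h')] at hm'
      omega
    · rw [disjoint_left]
      intro a ha hb
      simp only [mem_filter, hRdef, mem_univ, true_and] at ha hb
      omega
  have e4 := pre_split A m m' h
  have e5 : R ∩ A = A.filter fun v => m ≤ v.val ∧ v.val < m' := by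
    ext v
    simp only [mem_inter, mem_filter, hRdef, mem_univ, true_and]
    tauto
  rw [e5] at e2
  omega

lemma wk_symmDiff_ge (A : Finset (Fin n)) (m m' : ℕ) (h : m ≤ m') (h' : m' ≤ n) :
    wk (A ∆ upD m) m' = 2 * wk A m - wk A m' := by
  have := pre_symmDiff_ge A m m' h h'
  unfold wk
  push_cast
  omega

lemma wk_symmDiff_le (A : Finset (Fin n)) (m m' : ℕ) (h : m' ≤ m) :
    wk (A ∆ upD m) m' = wk A m' := by
  unfold wk
  rw [pre_symmDiff_le A m m' h]

def hitSet (n' : ℕ) (s : ℕ) : Finset (Finset (Fin n')) :=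
  univ.filter (fun A => ((Finset.Icc 1 n').filter (fun m => (s : ℤ) ≤ wk A m)).Nonempty)

lemma mem_hitSet {n' s : ℕ} {A : Finset (Fin n')} :
    A ∈ hitSet n' s ↔ ∃ m ∈ Finset.Icc 1 n', (s : ℤ) ≤ wk A m := by
  rw [hitSet, mem_filter, Finset.filter_nonempty_iff]
  simp only [mem_univ, true_and]

def tailSet (n' : ℕ) (s : ℕ) : Finset (Finset (Fin n')) :=
  univ.filter (fun C => (n' : ℤ) + s ≤ 2 * #C)

lemma wk_top (A : Finset (Fin n)) : wk A n = 2 * #A - n := by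
  unfold wk
  rw [pre_top]

open Classical in
/-- first hitting time -/
noncomputable def m0 (s : ℕ) (A : Finset (Fin n)) : ℕ :=
  if h : ∃ m, (s : ℤ) ≤ wk A m ∧ m ≤ n then Nat.find h else 0

lemma m0_spec (s : ℕ) (hs : 1 ≤ s) (A : Finset (Fin n))
    (h : ∃ m, (s : ℤ) ≤ wk A m ∧ m ≤ n) :
    1 ≤ m0 s A ∧ m0 s A ≤ n ∧ wk A (m0 s A) = s ∧ ∀ m < m0 s A, wk A m < s := by
  rw [m0, dif_pos h]
  have hspec := Nat.find_spec h
  have hmin : ∀ m < Nat.find h, ¬((s : ℤ) ≤ wk A m ∧ m ≤ n) := fun m hm => Nat.find_min h hm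
  set k := Nat.find h with hk
  have hk1 : 1 ≤ k := by
    rcases Nat.eq_zero_or_pos k with h0 | h0
    · exfalso
      have h1 := hspec.1
      rw [h0, wk_zero] at h1
      omega
    · exact h0
  have hkn : k ≤ n := hspec.2
  have hlow : ∀ m < k, wk A m < s := by
    intro m hm
    have h1 := hmin m hm
    have hmn : m ≤ n := by omega
    by_contra hcon
    push_neg at hcon
    exact h1 ⟨hcon, hmn⟩
  refine ⟨hk1, hkn, ?_, hlow⟩
  have hprev : wk A (k - 1) < s := hlow (k - 1) (by omega)
  have hstep : wk A k ≤ wk A (k - 1) + 1 := by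
    have hklt : k - 1 < n := by omega
    have hsucc := wk_succ A (k - 1) hklt
    have hkk : k - 1 + 1 = k := by omega
    rw [hkk] at hsucc
    rw [hsucc]
    split_ifs <;> omega
  have := hspec.1
  omega

lemma m0_reflect (s : ℕ) (hs : 1 ≤ s) (A : Finset (Fin n))
    (h : ∃ m, (s : ℤ) ≤ wk A m ∧ m ≤ n) :
    m0 s (A ∆ upD (m0 s A)) = m0 s A := by
  obtain ⟨h1, h2, h3, h4⟩ := m0_spec s hs A h
  set k := m0 s A with hkdef
  set C := A ∆ upD k with hCdef
  have hCk : wk C k = s := by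
    rw [hCdef, wk_symmDiff_ge A k k le_rfl h2, h3]
    omega
  have hClow : ∀ m < k, wk C m < s := by
    intro m hm
    rw [hCdef, wk_symmDiff_le A k m (le_of_lt hm)]
    exact h4 m hm
  have hCex : ∃ m, (s : ℤ) ≤ wk C m ∧ m ≤ n := ⟨k, by rw [hCk], h2⟩
  rw [m0, dif_pos hCex]
  apply le_antisymm
  · exact Nat.find_le ⟨by rw [hCk], h2⟩
  · by_contra hcon
    push_neg at hcon
    have hspec := Nat.find_spec hCex
    have := hClow _ hcon
    have := hspec.1
    omega

lemma card_hitSet_le (s : ℕ) (hs : 1 ≤ s) :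
    #(hitSet n s) ≤ #(tailSet n s) + #(tailSet n (s + 1)) := by
  classical
  have hsplit := card_filter_add_card_filter_not
    (s := hitSet n s) (p := fun A => (s : ℤ) ≤ wk A n)
  set H1 := (hitSet n s).filter (fun A => (s : ℤ) ≤ wk A n) with hH1
  set H2 := (hitSet n s).filter (fun A => ¬ (s : ℤ) ≤ wk A n) with hH2
  have hc1 : #H1 ≤ #(tailSet n s) := by
    apply card_le_card
    intro A hA
    rw [hH1, mem_filter] at hA
    rw [tailSet, mem_filter]
    refine ⟨mem_univ _, ?_⟩
    have h2 := hA.2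
    rw [wk_top] at h2
    omega
  have hex : ∀ A ∈ H2, ∃ m, (s : ℤ) ≤ wk A m ∧ m ≤ n := by
    intro A hA
    rw [hH2, mem_filter, mem_hitSet] at hA
    obtain ⟨⟨m, hm, hwk⟩, _⟩ := hA
    rw [Finset.mem_Icc] at hm
    exact ⟨m, hwk, hm.2⟩
  have hc2 : #H2 ≤ #(tailSet n (s + 1)) := by
    apply card_le_card_of_injOn (fun A => A ∆ upD (m0 s A))
    · intro A hA
      obtain ⟨h1, h2, h3, _⟩ := m0_spec s hs A (hex A hA)
      simp only [tailSet, mem_coe, mem_filter]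
      refine ⟨mem_univ _, ?_⟩
      have hid := wk_symmDiff_ge A (m0 s A) n h2 le_rfl
      rw [h3] at hid
      have hAn : wk A n < s := by
        rw [mem_coe, hH2, mem_filter] at hA
        have := hA.2
        omega
      have hCn : (s : ℤ) + 1 ≤ wk (A ∆ upD (m0 s A)) n := by
        rw [hid]; omega
      rw [wk_top] at hCn
      omega
    · intro A₁ hA₁ A₂ hA₂ heq
      simp only [mem_coe] at hA₁ hA₂
      have heq2 : A₁ ∆ upD (m0 s A₁) = A₂ ∆ upD (m0 s A₂) := heq
      have hr₁ := m0_reflect s hs A₁ (hex A₁ hA₁)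
      have hr₂ := m0_reflect s hs A₂ (hex A₂ hA₂)
      have hk : m0 s A₁ = m0 s A₂ := by
        rw [← hr₁, ← hr₂, heq2]
      have : (A₁ ∆ upD (m0 s A₁)) ∆ upD (m0 s A₁) = (A₂ ∆ upD (m0 s A₂)) ∆ upD (m0 s A₂) := by
        rw [heq2, hk]
      rwa [symmDiff_symmDiff_cancel_right, symmDiff_symmDiff_cancel_right] at this
  omega

def Tn (n' s : ℕ) : ℕ := ∑ j ∈ range (n' + 1), if n' + s ≤ 2 * j then n'.choose j else 0

lemma card_tailSet (n' s : ℕ) : #(tailSet n' s) = Tn n' s := by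
  classical
  rw [tailSet, Tn]
  rw [card_eq_sum_card_fiberwise (f := fun C : Finset (Fin n') => #C) (t := range (n' + 1))]
  · apply sum_congr rfl
    intro j hj
    have hfib : ((univ.filter (fun C : Finset (Fin n') => (n' : ℤ) + s ≤ 2 * #C)).filter
        (fun C => #C = j)) = if n' + s ≤ 2 * j then univ.filter (fun C : Finset (Fin n') => #C = j)
          else ∅ := by
      split_ifs with hcond
      · ext C
        simp only [mem_filter, mem_univ, true_and, notMem_empty]
        constructor
        · rintro ⟨_, h2⟩; exact h2
        · rintro h2
          refine ⟨?_, h2⟩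
          rw [h2]
          exact_mod_cast hcond
      · ext C
        simp only [mem_filter, mem_univ, true_and, notMem_empty, iff_false]
        rintro ⟨h1, h2⟩
        rw [h2] at h1
        have : n' + s ≤ 2 * j := by exact_mod_cast h1
        omega
    rw [hfib]
    split_ifs with hcond
    · have : (univ.filter (fun C : Finset (Fin n') => #C = j)) = powersetCard j univ := by
        ext C
        simp [mem_powersetCard]
      rw [this, card_powersetCard, card_univ, Fintype.card_fin]
    · simp
  · intro C _
    simp only [mem_coe, mem_range]
    have := card_le_univ C
    rw [Fintype.card_fin] at this
    omega

lemma Tn_zero_add (n' : ℕ) : Tn n' 0 + Tn n' 1 ≤ 2 ^ n' := by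
  classical
  rw [← card_tailSet, ← card_tailSet]
  have himg : #(tailSet n' 1) = #((tailSet n' 1).image compl) := by
    rw [card_image_of_injective _ compl_injective]
  rw [himg]
  have hdisj : Disjoint (tailSet n' 0) ((tailSet n' 1).image compl) := by
    rw [disjoint_left]
    intro C hC hC'
    rw [tailSet, mem_filter] at hC
    rw [mem_image] at hC'
    obtain ⟨D, hD, rfl⟩ := hC'
    rw [tailSet, mem_filter] at hD
    have hcard : #Dᶜ = Fintype.card (Fin n') - #D := card_compl D
    rw [Fintype.card_fin] at hcard
    have h1 := hC.2
    have h2 := hD.2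
    rw [hcard] at h1
    have hDn : #D ≤ n' := by
      have := card_le_univ D
      rwa [Fintype.card_fin] at this
    push_cast at h1 h2
    omega
  calc #(tailSet n' 0) + #((tailSet n' 1).image compl)
      = #(tailSet n' 0 ∪ (tailSet n' 1).image compl) := (card_union_of_disjoint hdisj).symm
    _ ≤ #(univ : Finset (Finset (Fin n'))) := card_le_univ _
    _ = 2 ^ n' := by rw [card_univ, Fintype.card_finset, Fintype.card_fin]

lemma Tn_top (n' : ℕ) : Tn n' n' = 1 := by
  rw [Tn]
  rw [Finset.sum_range_succ]
  have h1 : ∀ j ∈ range n', (if n' + n' ≤ 2 * j then n'.choose j else 0) = 0 := by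
    intro j hj
    rw [mem_range] at hj
    rw [if_neg (by omega)]
  rw [Finset.sum_congr rfl h1]
  simp only [Finset.sum_const_zero, zero_add]
  rw [if_pos (by omega), Nat.choose_self]

lemma Tn_past (n' s : ℕ) (h : n' < s) : Tn n' s = 0 := by
  rw [Tn]
  apply Finset.sum_eq_zero
  intro j hj
  rw [mem_range] at hj
  rw [if_neg (by omega)]

lemma Tn_succ (n' s : ℕ) (hs : 1 ≤ s) : Tn (n' + 1) s = Tn n' (s - 1) + Tn n' (s + 1) := by
  rw [Tn, Finset.sum_range_succ']
  have h0 : (if n' + 1 + s ≤ 2 * 0 then (n' + 1).choose 0 else 0) = 0 := by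
    rw [if_neg (by omega)]
  rw [h0, add_zero]
  have hsplit : ∀ i ∈ range (n' + 1),
      (if n' + 1 + s ≤ 2 * (i + 1) then (n' + 1).choose (i + 1) else 0)
        = (if n' + (s - 1) ≤ 2 * i then n'.choose i else 0)
          + (if n' + (s + 1) ≤ 2 * (i + 1) then n'.choose (i + 1) else 0) := by
    intro i _
    rw [Nat.choose_succ_succ']
    have hc1 : (n' + 1 + s ≤ 2 * (i + 1)) ↔ (n' + (s - 1) ≤ 2 * i) := by omega
    have hc2 : (n' + 1 + s ≤ 2 * (i + 1)) ↔ (n' + (s + 1) ≤ 2 * (i + 1)) := by omega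
    by_cases hcond : n' + 1 + s ≤ 2 * (i + 1)
    · rw [if_pos hcond, if_pos (hc1.1 hcond), if_pos (hc2.1 hcond)]
    · rw [if_neg hcond, if_neg (fun hc => hcond (hc1.2 hc)), if_neg (fun hc => hcond (hc2.2 hc))]
  rw [Finset.sum_congr rfl hsplit, Finset.sum_add_distrib]
  congr 1
  set g : ℕ → ℕ := fun j => if n' + (s + 1) ≤ 2 * j then n'.choose j else 0 with hg
  have e1 := Finset.sum_range_succ' g (n' + 1)
  have e2 := Finset.sum_range_succ g (n' + 1)
  have hg0 : g 0 = 0 := by rw [hg]; simp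
  have hgtop : g (n' + 1) = 0 := by
    rw [hg]
    simp only
    rw [Nat.choose_succ_self]
    simp
  rw [hg0, add_zero] at e1
  rw [hgtop, add_zero] at e2
  rw [Tn, ← e2, e1]

lemma binEnt_eq (z : ℝ) : binEnt z = Real.binEntropy z / Real.log 2 := by
  rw [binEnt, Real.binEntropy, Real.logb, Real.logb, one_div, one_div]
  ring

lemma binEnt_half : binEnt (1 / 2) = 1 := by
  norm_num [binEnt, Real.logb_self_eq_one]

lemma binEnt_one : binEnt 1 = 0 := by
  rw [binEnt]
  norm_num

lemma rpow_binEnt {p : ℝ} (h0 : 0 < p) (h1 : p < 1) :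
    (2 : ℝ) ^ binEnt p = p ^ (-p) * (1 - p) ^ (-(1 - p)) := by
  have hq : 0 < 1 - p := by linarith
  rw [binEnt, Real.rpow_add two_pos]
  congr 1
  · calc (2:ℝ) ^ (p * Real.logb 2 (1/p))
        = ((2:ℝ) ^ Real.logb 2 (1/p)) ^ p := by rw [mul_comm, Real.rpow_mul two_pos.le]
      _ = (1/p) ^ p := by rw [Real.rpow_logb two_pos (by norm_num) (by positivity)]
      _ = p ^ (-p) := by rw [one_div, Real.inv_rpow h0.le, ← Real.rpow_neg h0.le]
  · calc (2:ℝ) ^ ((1-p) * Real.logb 2 (1/(1-p)))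
        = ((2:ℝ) ^ Real.logb 2 (1/(1-p))) ^ (1-p) := by rw [mul_comm, Real.rpow_mul two_pos.le]
      _ = (1/(1-p)) ^ (1-p) := by rw [Real.rpow_logb two_pos (by norm_num) (by positivity)]
      _ = (1-p) ^ (-(1-p)) := by rw [one_div, Real.inv_rpow hq.le, ← Real.rpow_neg hq.le]

lemma amgm {p x : ℝ} (hp : 1 / 2 ≤ p) (hp1 : p ≤ 1) (hx : 0 < x) :
    (2 : ℝ) ^ binEnt p * x ^ p ≤ 1 + x := by
  rcases eq_or_lt_of_le hp1 with rfl | hlt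
  · rw [binEnt_one, Real.rpow_zero, one_mul, Real.rpow_one]
    linarith
  · have hp0 : 0 < p := by linarith
    have hq0 : 0 < 1 - p := by linarith
    have hkey := Real.geom_mean_le_arith_mean2_weighted
      (le_of_lt hq0) (le_of_lt hp0)
      (le_of_lt (show (0:ℝ) < (1 - p)⁻¹ by positivity))
      (le_of_lt (show (0:ℝ) < x / p by positivity))
      (by ring)
    calc (2 : ℝ) ^ binEnt p * x ^ p
        = ((1 - p)⁻¹) ^ (1 - p) * (x / p) ^ p := by
          rw [rpow_binEnt hp0 hlt, Real.inv_rpow hq0.le, ← Real.rpow_neg hq0.le,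
            Real.div_rpow hx.le hp0.le, Real.rpow_neg hp0.le, div_eq_mul_inv]
          ring
      _ ≤ (1 - p) * (1 - p)⁻¹ + p * (x / p) := hkey
      _ = 1 + x := by field_simp
      
lemma le_one_plus {p x : ℝ} (hp : 1 / 2 ≤ p) (hp1 : p ≤ 1) (hx : 0 < x) :
    (2 : ℝ) ^ binEnt p ≤ (1 + x) * x ^ (-p) := by
  rw [Real.rpow_neg hx.le, ← div_eq_mul_inv, le_div_iff₀ (by positivity)]
  exact amgm hp hp1 hx

lemma pow_bnd (n' s' : ℕ) (h : s' ≤ n') {x : ℝ} (hx : 1 ≤ x) :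
    (2 : ℝ) ^ ((n' : ℝ) * binEnt ((1 + (s' : ℝ) / (n' : ℝ)) / 2))
      ≤ (1 + x) ^ ((n' : ℝ)) * x ^ (-(((n' : ℝ) + (s' : ℝ)) / 2)) := by
  have hx0 : (0:ℝ) < x := by linarith
  rcases Nat.eq_zero_or_pos n' with rfl | hn
  · interval_cases s'
    simp
  · have hn0 : (0:ℝ) < n' := by exact_mod_cast hn
    set p' : ℝ := (1 + (s' : ℝ) / (n' : ℝ)) / 2 with hp'def
    have hs0 : (0:ℝ) ≤ (s' : ℝ) / (n' : ℝ) := by positivity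
    have hs1 : (s' : ℝ) / (n' : ℝ) ≤ 1 := by
      rw [div_le_one hn0]
      exact_mod_cast h
    have hp'l : 1 / 2 ≤ p' := by rw [hp'def]; linarith
    have hp'u : p' ≤ 1 := by rw [hp'def]; linarith
    have h1 := le_one_plus hp'l hp'u hx0
    have h2 : ((2:ℝ) ^ binEnt p') ^ ((n':ℝ)) ≤ ((1 + x) * x ^ (-p')) ^ ((n':ℝ)) := by
      apply Real.rpow_le_rpow (by positivity) h1 (by positivity)
    calc (2 : ℝ) ^ ((n' : ℝ) * binEnt p')
        = ((2:ℝ) ^ binEnt p') ^ ((n':ℝ)) := by rw [← Real.rpow_mul two_pos.le, mul_comm]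
      _ ≤ ((1 + x) * x ^ (-p')) ^ ((n':ℝ)) := h2
      _ = (1 + x) ^ ((n':ℝ)) * (x ^ (-p')) ^ ((n':ℝ)) := by
          rw [Real.mul_rpow (by positivity) (by positivity)]
      _ = (1 + x) ^ ((n':ℝ)) * x ^ (-(((n' : ℝ) + (s' : ℝ)) / 2)) := by
          rw [← Real.rpow_mul hx0.le]
          have he : -p' * (n':ℝ) = -(((n':ℝ) + (s':ℝ)) / 2) := by
            rw [hp'def]
            field_simp
          rw [he]

lemma bnd_eq (n1 s : ℕ) (h1 : 1 ≤ n1) (hs : s < n1) :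
    (1 + ((n1:ℝ) + s) / ((n1:ℝ) - s)) ^ ((n1:ℝ))
        * (((n1:ℝ) + s) / ((n1:ℝ) - s)) ^ (-(((n1:ℝ) + s) / 2))
      = 2 ^ ((n1:ℝ) * binEnt ((1 + (s:ℝ) / (n1:ℝ)) / 2)) := by
  have hn0 : (0:ℝ) < n1 := by exact_mod_cast h1
  have hds : (0:ℝ) < (n1:ℝ) - s := by
    have : (s:ℝ) < n1 := by exact_mod_cast hs
    linarith
  have hns : (0:ℝ) < (n1:ℝ) + s := by positivity
  set x0 : ℝ := ((n1:ℝ) + s) / ((n1:ℝ) - s) with hx0def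
  have hx0p : 0 < x0 := by positivity
  have h1x : (0:ℝ) < 1 + x0 := by positivity
  have hLpos : 0 < (1 + x0) ^ ((n1:ℝ)) * x0 ^ (-(((n1:ℝ) + s) / 2)) := by positivity
  have hRpos : (0:ℝ) < 2 ^ ((n1:ℝ) * binEnt ((1 + (s:ℝ) / (n1:ℝ)) / 2)) :=
    Real.rpow_pos_of_pos two_pos _
  rw [← Real.exp_log hLpos, ← Real.exp_log hRpos]
  congr 1
  rw [Real.log_mul (ne_of_gt (Real.rpow_pos_of_pos h1x _))
    (ne_of_gt (Real.rpow_pos_of_pos hx0p _)),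
    Real.log_rpow h1x, Real.log_rpow hx0p, Real.log_rpow two_pos]
  have e1 : 1 + x0 = (2 * (n1:ℝ)) / ((n1:ℝ) - s) := by
    rw [hx0def, ← div_self (ne_of_gt hds), ← add_div]
    congr 1
    ring
  have e2 : (1 + (s:ℝ) / (n1:ℝ)) / 2 = ((n1:ℝ) + s) / (2 * (n1:ℝ)) := by
    field_simp
  have e3 : 1 - ((n1:ℝ) + s) / (2 * (n1:ℝ)) = ((n1:ℝ) - s) / (2 * (n1:ℝ)) := by
    field_simp; ring
  have e4 : (1:ℝ) / (((n1:ℝ) + s) / (2 * (n1:ℝ))) = (2 * (n1:ℝ)) / ((n1:ℝ) + s) := by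
    rw [one_div_div]
  have e5 : (1:ℝ) / (((n1:ℝ) - s) / (2 * (n1:ℝ))) = (2 * (n1:ℝ)) / ((n1:ℝ) - s) := by
    rw [one_div_div]
  rw [e1, binEnt, e2, e3, e4, e5, Real.logb, Real.logb]
  rw [hx0def]
  have hl1 : Real.log ((2 * (n1:ℝ)) / ((n1:ℝ) - s))
      = Real.log (2 * (n1:ℝ)) - Real.log ((n1:ℝ) - s) :=
    Real.log_div (by positivity) (ne_of_gt hds)
  have hl2 : Real.log (((n1:ℝ) + s) / ((n1:ℝ) - s))
      = Real.log ((n1:ℝ) + s) - Real.log ((n1:ℝ) - s) :=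
    Real.log_div (ne_of_gt hns) (ne_of_gt hds)
  have hl3 : Real.log ((2 * (n1:ℝ)) / ((n1:ℝ) + s))
      = Real.log (2 * (n1:ℝ)) - Real.log ((n1:ℝ) + s) :=
    Real.log_div (by positivity) (ne_of_gt hns)
  rw [hl1, hl2, hl3]
  have hlog2 : Real.log 2 ≠ 0 := by
    have := Real.log_pos (by norm_num : (1:ℝ) < 2)
    linarith
  field_simp
  ring

lemma binEnt_pair {p1 p2 b : ℝ} (h1 : 1/2 ≤ p1) (h1' : p1 ≤ 1) (h2 : 1/2 ≤ p2) (h2' : p2 ≤ 1)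
    (hb : 1/2 ≤ b) (hb' : b ≤ 1) (hmid : b ≤ (p1 + p2)/2) :
    binEnt p1 + binEnt p2 ≤ 2 * binEnt b := by
  have hcon := Real.strictConcave_binEntropy.concaveOn
  have hp1m : p1 ∈ Set.Icc (0:ℝ) 1 := ⟨by linarith, h1'⟩
  have hp2m : p2 ∈ Set.Icc (0:ℝ) 1 := ⟨by linarith, h2'⟩
  have h3 : Real.binEntropy p1 + Real.binEntropy p2
      ≤ 2 * Real.binEntropy ((p1 + p2)/2) := by
    have hc := hcon.2 hp1m hp2m (by norm_num : (0:ℝ) ≤ 1/2) (by norm_num : (0:ℝ) ≤ 1/2)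
      (by norm_num : (1:ℝ)/2 + 1/2 = 1)
    simp only [smul_eq_mul] at hc
    have harg : (1/2) * p1 + (1/2) * p2 = (p1 + p2)/2 := by ring
    rw [harg] at hc
    linarith
  have hmidm : (p1 + p2)/2 ∈ Set.Icc (2⁻¹ : ℝ) 1 := ⟨by norm_num; linarith, by linarith⟩
  have hbm : b ∈ Set.Icc (2⁻¹ : ℝ) 1 := ⟨by norm_num; linarith, hb'⟩
  have h4 : Real.binEntropy ((p1 + p2)/2) ≤ Real.binEntropy b := by
    rcases eq_or_lt_of_le hmid with heq | hlt
    · rw [← heq]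
    · exact (Real.binEntropy_strictAntiOn hbm hmidm hlt).le
  have hlog2 : (0:ℝ) < Real.log 2 := Real.log_pos (by norm_num)
  rw [binEnt_eq, binEnt_eq, binEnt_eq, ← add_div, ← mul_div_assoc]
  rw [div_le_div_iff₀ hlog2 hlog2]
  have h5 : Real.binEntropy p1 + Real.binEntropy p2 ≤ 2 * Real.binEntropy b := by linarith
  nlinarith [hlog2]

lemma tail_bound : ∀ n' s : ℕ, s ≤ n' →
    ((Tn n' s + Tn n' (s + 1) : ℕ) : ℝ)
      ≤ 2 ^ ((n' : ℝ) * binEnt ((1 + (s : ℝ) / (n' : ℝ)) / 2)) := by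
  intro n'
  induction n' with
  | zero =>
    intro s hs
    interval_cases s
    have h1 : Tn 0 0 = 1 := by simp [Tn]
    have h2 : Tn 0 1 = 0 := Tn_past 0 1 (by omega)
    rw [h1, h2]
    norm_num
  | succ n ih =>
    intro s hs
    rcases Nat.eq_zero_or_pos s with rfl | hs1
    · have hb := Tn_zero_add (n + 1)
      calc ((Tn (n+1) 0 + Tn (n+1) (0+1) : ℕ) : ℝ) ≤ ((2 ^ (n+1) : ℕ) : ℝ) := by
            exact_mod_cast hb
        _ = (2:ℝ) ^ (((n+1 : ℕ)) : ℝ) := by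
            rw [Real.rpow_natCast]; push_cast; ring
        _ = 2 ^ ((((n+1 : ℕ)) : ℝ) * binEnt ((1 + ((0:ℕ) : ℝ) / (((n+1 : ℕ)) : ℝ)) / 2)) := by
            norm_num [binEnt_half]
    · rcases eq_or_lt_of_le hs with rfl | hlt
      · -- s = n + 1
        rw [Tn_top, Tn_past _ _ (by omega)]
        have harg : (1 + ((n+1 : ℕ) : ℝ) / ((n+1 : ℕ) : ℝ)) / 2 = 1 := by
          rw [div_self (by positivity)]
          norm_num
        rw [harg, binEnt_one, mul_zero, Real.rpow_zero]
        norm_num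
      · have hsn : s ≤ n := by omega
        have hrec1 := Tn_succ n s hs1
        have hrec2 := Tn_succ n (s+1) (by omega)
        rw [Nat.add_sub_cancel] at hrec2
        set x : ℝ := ((n:ℝ) + 1 + s) / ((n:ℝ) + 1 - s) with hxdef
        have hsR : (s:ℝ) ≤ n := by exact_mod_cast hsn
        have hds : (0:ℝ) < (n:ℝ) + 1 - s := by linarith
        have hx1 : 1 ≤ x := by
          rw [hxdef, le_div_iff₀ hds]
          have : (0:ℝ) ≤ (s:ℝ) := by positivity
          linarith
        have hx0 : (0:ℝ) < x := by linarith
        have hsum : ((Tn (n+1) s + Tn (n+1) (s+1) : ℕ) : ℝ)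
            = ((Tn n (s-1) + Tn n s : ℕ) : ℝ) + ((Tn n (s+1) + Tn n (s+2) : ℕ) : ℝ) := by
          rw [hrec1, hrec2]
          push_cast
          ring
        have hIH1 := ih (s-1) (by omega)
        rw [show s - 1 + 1 = s by omega] at hIH1
        have hIH1' : ((Tn n (s-1) + Tn n s : ℕ) : ℝ)
            ≤ (1+x) ^ ((n:ℝ)) * x ^ (-(((n:ℝ) + (((s:ℝ)) - 1)) / 2)) := by
          have hb := pow_bnd n (s-1) (by omega) hx1
          have hc : ((s - 1 : ℕ) : ℝ) = (s:ℝ) - 1 := by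
            have : (1:ℕ) ≤ s := hs1
            push_cast [this]
            ring
          rw [hc] at hb
          rw [hc] at hIH1
          exact le_trans hIH1 hb
        have hIH2' : ((Tn n (s+1) + Tn n (s+2) : ℕ) : ℝ)
            ≤ (1+x) ^ ((n:ℝ)) * x ^ (-(((n:ℝ) + ((s:ℝ) + 1)) / 2)) := by
          rcases eq_or_lt_of_le hsn with rfl | hlt2
          · rw [Tn_past _ _ (by omega), Tn_past _ _ (by omega)]
            norm_num
            positivity
          · have hb := pow_bnd n (s+1) (by omega) hx1
            have hc : ((s + 1 : ℕ) : ℝ) = (s:ℝ) + 1 := by push_cast; ring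
            have hIH2 := ih (s+1) (by omega)
            rw [hc] at hb
            rw [hc] at hIH2
            exact le_trans hIH2 hb
        have htarget := bnd_eq (n+1) s (by omega) (by omega)
        rw [hsum]
        have hcomb : (1+x) ^ ((n:ℝ)) * x ^ (-(((n:ℝ) + ((s:ℝ) - 1)) / 2))
            + (1+x) ^ ((n:ℝ)) * x ^ (-(((n:ℝ) + ((s:ℝ) + 1)) / 2))
            = (1+x) ^ ((n:ℝ) + 1) * x ^ (-((((n:ℝ) + 1) + (s:ℝ)) / 2)) := by
          have ea : -(((n:ℝ) + ((s:ℝ) - 1)) / 2) = 1 + -((((n:ℝ) + 1) + (s:ℝ)) / 2) := by ring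
          have eb : -(((n:ℝ) + ((s:ℝ) + 1)) / 2) = -((((n:ℝ) + 1) + (s:ℝ)) / 2) := by ring
          rw [ea, eb, Real.rpow_add hx0, Real.rpow_one]
          rw [Real.rpow_add_one (by positivity : (1+x) ≠ 0) ((n:ℝ))]
          ring
        calc ((Tn n (s-1) + Tn n s : ℕ) : ℝ) + ((Tn n (s+1) + Tn n (s+2) : ℕ) : ℝ)
            ≤ (1+x) ^ ((n:ℝ)) * x ^ (-(((n:ℝ) + ((s:ℝ) - 1)) / 2))
              + (1+x) ^ ((n:ℝ)) * x ^ (-(((n:ℝ) + ((s:ℝ) + 1)) / 2)) :=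
              add_le_add hIH1' hIH2'
          _ = (1+x) ^ ((n:ℝ) + 1) * x ^ (-((((n:ℝ) + 1) + (s:ℝ)) / 2)) := hcomb
          _ = 2 ^ ((((n+1:ℕ)) : ℝ) * binEnt ((1 + (s : ℝ) / (((n+1:ℕ)) : ℝ)) / 2)) := by
              rw [← htarget]
              push_cast
              rw [hxdef]
          _ = 2 ^ ((((n+1:ℕ)) : ℝ) * binEnt ((1 + (s : ℝ) / (((n+1:ℕ)) : ℝ)) / 2)) := rfl

end FR

open Finset in
theorem stmt_11 (n : ℕ) (β : ℝ) (hβ0 : 0 < β) (hβ1 : β < 1)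
    (F G : Finset (Finset (Fin n)))
    (h : ∀ A ∈ F, ∀ B ∈ G, β * n < ((A ∩ B).card : ℝ)) :
    (F.card : ℝ) * (G.card : ℝ) ≤ (2 : ℝ) ^ (2 * (n : ℝ) * binEnt ((1 + β) / 2)) := by
  classical
  rcases Nat.eq_zero_or_pos n with rfl | hn
  · have hF : #F ≤ 1 := by
      have h1 := Finset.card_le_univ F
      rwa [Fintype.card_finset, Fintype.card_fin, pow_zero] at h1
    have hG : #G ≤ 1 := by
      have h1 := Finset.card_le_univ G
      rwa [Fintype.card_finset, Fintype.card_fin, pow_zero] at h1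
    have hR : (2:ℝ) ^ (2 * ((0:ℕ) : ℝ) * binEnt ((1 + β) / 2)) = 1 := by
      norm_num
    rw [hR]
    have hm : (#F : ℝ) * #G ≤ 1 * 1 := by
      apply mul_le_mul
      · exact_mod_cast hF
      · exact_mod_cast hG
      · positivity
      · norm_num
    simpa using hm
  · set t : ℕ := Nat.floor (β * n) + 1 with htdef
    have ht1 : 1 ≤ t := by omega
    have hβn : (0:ℝ) ≤ β * n := by positivity
    have hn0R : (0:ℝ) < n := by exact_mod_cast hn
    have hcross : FR.Cross t F G := by
      intro A hA B hB
      have hAB := h A hA B hB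
      have hfl : Nat.floor (β * n) < #(A ∩ B) := (Nat.floor_lt hβn).mpr hAB
      omega
    obtain ⟨F', G', hsF, hsG, hcF, hcG, hcr⟩ :=
      FR.exists_shifted t (FR.phi F + FR.phi G) F G le_rfl hcross
    rcases Finset.eq_empty_or_nonempty F' with rfl | hFne
    · have hF0 : #F = 0 := by rw [← hcF]; simp
      rw [hF0]
      have : (0:ℝ) < (2 : ℝ) ^ (2 * (n : ℝ) * binEnt ((1 + β) / 2)) :=
        Real.rpow_pos_of_pos two_pos _
      simp only [Nat.cast_zero, zero_mul]
      linarith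
    rcases Finset.eq_empty_or_nonempty G' with rfl | hGne
    · have hG0 : #G = 0 := by rw [← hcG]; simp
      rw [hG0]
      have : (0:ℝ) < (2 : ℝ) ^ (2 * (n : ℝ) * binEnt ((1 + β) / 2)) :=
        Real.rpow_pos_of_pos two_pos _
      simp only [Nat.cast_zero, mul_zero]
      linarith
    have hIccne : (Finset.Icc 1 n).Nonempty := ⟨1, Finset.mem_Icc.mpr ⟨le_rfl, hn⟩⟩
    set mu : Finset (Fin n) → ℤ :=
      fun A => ((Finset.Icc 1 n).image (FR.wk A)).max' (hIccne.image _) with hmudef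
    have mu_ge : ∀ (A : Finset (Fin n)) (m : ℕ), 1 ≤ m → m ≤ n → FR.wk A m ≤ mu A := by
      intro A m h1 h2
      apply Finset.le_max'
      exact Finset.mem_image_of_mem _ (Finset.mem_Icc.mpr ⟨h1, h2⟩)
    have mu_mem : ∀ A : Finset (Fin n), ∃ m, 1 ≤ m ∧ m ≤ n ∧ FR.wk A m = mu A := by
      intro A
      have hmm := Finset.max'_mem _ (hIccne.image (FR.wk A))
      rw [Finset.mem_image] at hmm
      obtain ⟨m, hm, he⟩ := hmm
      rw [Finset.mem_Icc] at hm
      exact ⟨m, hm.1, hm.2, he⟩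
    have mu_le_n : ∀ A : Finset (Fin n), mu A ≤ n := by
      intro A
      obtain ⟨m, h1, h2, he⟩ := mu_mem A
      rw [← he]
      calc FR.wk A m ≤ m := FR.wk_le A m h2
        _ ≤ (n:ℤ) := by exact_mod_cast h2
    set s1 : ℤ := (F'.image mu).min' (hFne.image _) with hs1def
    set s2 : ℤ := (G'.image mu).min' (hGne.image _) with hs2def
    obtain ⟨A₀, hA₀, hA₀e⟩ : ∃ A ∈ F', mu A = s1 := by
      have hmm := Finset.min'_mem _ (hFne.image mu)
      rw [Finset.mem_image] at hmm
      obtain ⟨A, hA, he⟩ := hmm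
      exact ⟨A, hA, he⟩
    obtain ⟨B₀, hB₀, hB₀e⟩ : ∃ B ∈ G', mu B = s2 := by
      have hmm := Finset.min'_mem _ (hGne.image mu)
      rw [Finset.mem_image] at hmm
      obtain ⟨B, hB, he⟩ := hmm
      exact ⟨B, hB, he⟩
    have s1_le : ∀ A ∈ F', s1 ≤ mu A := fun A hA =>
      Finset.min'_le _ _ (Finset.mem_image_of_mem mu hA)
    have s2_le : ∀ B ∈ G', s2 ≤ mu B := fun B hB =>
      Finset.min'_le _ _ (Finset.mem_image_of_mem mu hB)
    obtain ⟨m, hm1, hmn, hwk⟩ := FR.key t ht1 B₀ A₀ (by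
      intro A' hreach
      have hA' : A' ∈ F' := FR.shifted_reach hsF hA₀ hreach
      exact hcr A' hA' B₀ hB₀)
    have hkey : 2 * (t:ℤ) ≤ s1 + s2 := by
      have h1 := mu_ge A₀ m hm1 hmn
      have h2 := mu_ge B₀ m hm1 hmn
      rw [hA₀e] at h1
      rw [hB₀e] at h2
      omega
    set u1 : ℕ := s1.toNat with hu1def
    set u2 : ℕ := s2.toNat with hu2def
    have hu12 : 2 * t ≤ u1 + u2 := by
      have h1 : s1 ≤ (u1 : ℤ) := Int.self_le_toNat s1
      have h2 : s2 ≤ (u2 : ℤ) := Int.self_le_toNat s2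
      omega
    have hu1n : u1 ≤ n := by
      have h1 := mu_le_n A₀
      rw [hA₀e] at h1
      omega
    have hu2n : u2 ≤ n := by
      have h1 := mu_le_n B₀
      rw [hB₀e] at h1
      omega
    have count : ∀ (H : Finset (Finset (Fin n))) (sH : ℤ) (uH : ℕ), uH = sH.toNat → uH ≤ n →
        (∀ A ∈ H, sH ≤ mu A) →
        (#H : ℝ) ≤ 2 ^ ((n : ℝ) * binEnt ((1 + (uH : ℝ) / (n : ℝ)) / 2)) := by
      intro H sH uH huH huHn hle
      rcases Nat.eq_zero_or_pos uH with h0 | h1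
      · have hcard : #H ≤ 2 ^ n := by
          have h2 := Finset.card_le_univ H
          rwa [Fintype.card_finset, Fintype.card_fin] at h2
        calc (#H : ℝ) ≤ ((2 ^ n : ℕ) : ℝ) := by exact_mod_cast hcard
          _ = (2:ℝ) ^ ((n:ℕ) : ℝ) := by
              rw [Real.rpow_natCast]
              push_cast
              ring
          _ = 2 ^ ((n : ℝ) * binEnt ((1 + (uH : ℝ) / (n : ℝ)) / 2)) := by
              rw [h0]
              norm_num [FR.binEnt_half]
      · have huint : (uH : ℤ) = sH := by
          rw [huH]
          apply Int.toNat_of_nonneg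
          omega
        have hsub : H ⊆ FR.hitSet n uH := by
          intro A hA
          rw [FR.mem_hitSet]
          obtain ⟨m', hm'1, hm'2, he⟩ := mu_mem A
          refine ⟨m', Finset.mem_Icc.mpr ⟨hm'1, hm'2⟩, ?_⟩
          rw [he]
          have h2 := hle A hA
          omega
        have hchain : #H ≤ FR.Tn n uH + FR.Tn n (uH + 1) := by
          calc #H ≤ #(FR.hitSet n uH) := Finset.card_le_card hsub
            _ ≤ #(FR.tailSet n uH) + #(FR.tailSet n (uH + 1)) := FR.card_hitSet_le uH h1
            _ = FR.Tn n uH + FR.Tn n (uH + 1) := by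
                rw [FR.card_tailSet, FR.card_tailSet]
        calc (#H : ℝ) ≤ ((FR.Tn n uH + FR.Tn n (uH + 1) : ℕ) : ℝ) := by exact_mod_cast hchain
          _ ≤ 2 ^ ((n : ℝ) * binEnt ((1 + (uH : ℝ) / (n : ℝ)) / 2)) := FR.tail_bound n uH huHn
    have c1 := count F' s1 u1 rfl hu1n s1_le
    have c2 := count G' s2 u2 rfl hu2n s2_le
    have hprod : (#F : ℝ) * #G = (#F' : ℝ) * #G' := by rw [hcF, hcG]
    rw [hprod]
    have hmul : (#F' : ℝ) * #G'
        ≤ 2 ^ ((n : ℝ) * binEnt ((1 + (u1 : ℝ) / (n : ℝ)) / 2))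
          * 2 ^ ((n : ℝ) * binEnt ((1 + (u2 : ℝ) / (n : ℝ)) / 2)) := by
      apply mul_le_mul c1 c2 (by positivity) (by positivity)
    refine le_trans hmul ?_
    rw [← Real.rpow_add two_pos]
    apply Real.rpow_le_rpow_of_exponent_le (by norm_num : (1:ℝ) ≤ 2)
    have ha1 : (0:ℝ) ≤ (u1 : ℝ) / n := by positivity
    have ha1' : (u1 : ℝ) / n ≤ 1 := by
      rw [div_le_one hn0R]
      exact_mod_cast hu1n
    have ha2 : (0:ℝ) ≤ (u2 : ℝ) / n := by positivity
    have ha2' : (u2 : ℝ) / n ≤ 1 := by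
      rw [div_le_one hn0R]
      exact_mod_cast hu2n
    have hsum : 2 * β ≤ (u1 : ℝ) / n + (u2 : ℝ) / n := by
      rw [← add_div, le_div_iff₀ hn0R]
      have hbt : β * n < t := by
        have := Nat.lt_floor_add_one (β * n)
        rw [htdef]
        push_cast
        linarith
      have h2t : (2 * t : ℕ) ≤ ((u1 + u2 : ℕ)) := hu12
      have hur : ((2 * t : ℕ) : ℝ) ≤ ((u1 + u2 : ℕ) : ℝ) := by exact_mod_cast h2t
      have htR : ((2 * t : ℕ) : ℝ) = 2 * (t : ℝ) := by push_cast; ring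
      have huR : ((u1 + u2 : ℕ) : ℝ) = (u1 : ℝ) + (u2 : ℝ) := by push_cast; ring
      rw [htR, huR] at hur
      linarith
    have hp := FR.binEnt_pair (p1 := (1 + (u1 : ℝ) / n) / 2) (p2 := (1 + (u2 : ℝ) / n) / 2)
      (b := (1 + β) / 2) (by linarith) (by linarith) (by linarith) (by linarith)
      (by linarith) (by linarith) (by linarith)
    calc (n : ℝ) * binEnt ((1 + (u1 : ℝ) / n) / 2) + (n : ℝ) * binEnt ((1 + (u2 : ℝ) / n) / 2)
        = (n:ℝ) * (binEnt ((1 + (u1 : ℝ) / n) / 2) + binEnt ((1 + (u2 : ℝ) / n) / 2)) := by ring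
      _ ≤ (n:ℝ) * (2 * binEnt ((1 + β) / 2)) := by
          apply mul_le_mul_of_nonneg_left hp (by positivity)
      _ = 2 * (n : ℝ) * binEnt ((1 + β) / 2) := by ring
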